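/- Let χ be a nontrivial additive character of F_q and N_0 = {m ∈ F_q^d : all coordinates nonzero}. Then for every g : F_q^d → ℂ, ‖g ∗ ((dσ_j)^∨ 1_{N_0})‖_{ℓ^2(F_q^d)} ≤ C q ‖g‖_{ℓ^2(F_q^d)} for a constant C depending only on d, where (dσ_j)^∨(m) = (q-1)^{-(d-1)} Σ_{x ∈ H_j} χ(m·x). -/

import Mathlib

set_option linter.unusedSectionVars false

open Finset Complex

namespace ConvN0Aux

variable {F : Type} [Field F] [Fintype F] [DecidableEq F]

lemma map_sum_eq_prod {ι : Type*} (χ : AddChar F ℂ) (s : Finset ι) (f : ι → F) :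
    χ (∑ i ∈ s, f i) = ∏ i ∈ s, χ (f i) := by
  induction s using Finset.cons_induction with
  | empty => simp
  | cons a s ha ih => rw [Finset.sum_cons, Finset.prod_cons, AddChar.map_add_eq_mul, ih]

lemma sum_char_mul (χ : AddChar F ℂ) (hχ : χ ≠ 1) (c : F) :
    ∑ a : F, χ (a * c) = if c = 0 then (Fintype.card F : ℂ) else 0 := by
  split_ifs with h
  · simp [h, Finset.card_univ]
  · have h2 : AddChar.mulShift χ c ≠ 1 := AddChar.IsPrimitive.of_ne_one hχ h
    have h3 : ∑ a : F, (AddChar.mulShift χ c) a = 0 :=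
      AddChar.sum_eq_zero_iff_ne_zero.2 h2
    simpa [AddChar.mulShift_apply, mul_comm] using h3

variable {d : ℕ}

lemma sum_char_dot (χ : AddChar F ℂ) (hχ : χ ≠ 1) (v : Fin d → F) :
    ∑ ξ : Fin d → F, χ (∑ i, ξ i * v i)
      = if v = 0 then ((Fintype.card F : ℂ)) ^ d else 0 := by
  calc ∑ ξ : Fin d → F, χ (∑ i, ξ i * v i)
      = ∑ ξ ∈ Fintype.piFinset (fun _ : Fin d => (univ : Finset F)),
          ∏ i, χ (ξ i * v i) := by
        rw [Fintype.piFinset_univ]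
        exact Finset.sum_congr rfl fun ξ _ => map_sum_eq_prod χ univ (fun i => ξ i * v i)
    _ = ∏ i, ∑ a : F, χ (a * v i) :=
        Finset.sum_prod_piFinset (univ : Finset F) (fun i a => χ (a * v i))
    _ = ∏ i : Fin d, (if v i = 0 then (Fintype.card F : ℂ) else 0) :=
        Finset.prod_congr rfl fun i _ => sum_char_mul χ hχ (v i)
    _ = if v = 0 then ((Fintype.card F : ℂ)) ^ d else 0 := by
        by_cases h : v = 0
        · simp [h, Finset.prod_const, Finset.card_univ]
        · obtain ⟨i, hi⟩ : ∃ i, v i ≠ 0 := by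
            by_contra hc; push_neg at hc; exact h (funext hc)
          rw [if_neg h]
          exact Finset.prod_eq_zero (Finset.mem_univ i) (by simp [hi])


/-- Fourier transform on `F^d` with respect to the pairing `χ (m ⬝ ξ)`. -/
noncomputable def Ft (χ : AddChar F ℂ) (f : (Fin d → F) → ℂ) (ξ : Fin d → F) : ℂ :=
  ∑ m : Fin d → F, f m * χ (∑ i, m i * ξ i)

lemma plancherel (χ : AddChar F ℂ) (hχ : χ ≠ 1) (f : (Fin d → F) → ℂ) :
    ∑ ξ : Fin d → F, Ft χ f ξ * (starRingEnd ℂ) (Ft χ f ξ)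
      = (Fintype.card F : ℂ) ^ d * ∑ m : Fin d → F, f m * (starRingEnd ℂ) (f m) := by
  have key : ∀ ξ : Fin d → F, Ft χ f ξ * (starRingEnd ℂ) (Ft χ f ξ)
      = ∑ m : Fin d → F, ∑ m' : Fin d → F,
          f m * (starRingEnd ℂ) (f m') * χ (∑ i, ξ i * (m - m') i) := by
    intro ξ
    unfold Ft
    rw [map_sum (starRingEnd ℂ), Finset.sum_mul_sum]
    refine Finset.sum_congr rfl fun m _ => Finset.sum_congr rfl fun m' _ => ?_
    rw [map_mul]
    have h1 : (starRingEnd ℂ) (χ (∑ i, m' i * ξ i)) = χ (-∑ i, m' i * ξ i) :=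
      (AddChar.map_neg_eq_conj χ _).symm
    have h2 : (∑ i, m i * ξ i) + (-∑ i, m' i * ξ i) = ∑ i, ξ i * (m - m') i := by
      rw [← sub_eq_add_neg, ← Finset.sum_sub_distrib]
      exact Finset.sum_congr rfl fun i _ => by
        simp [Pi.sub_apply, sub_mul, mul_comm, mul_sub]
    calc (f m * χ (∑ i, m i * ξ i)) * ((starRingEnd ℂ) (f m') * (starRingEnd ℂ) (χ (∑ i, m' i * ξ i)))
        = f m * (starRingEnd ℂ) (f m')
            * (χ (∑ i, m i * ξ i) * (starRingEnd ℂ) (χ (∑ i, m' i * ξ i))) := by ring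
      _ = f m * (starRingEnd ℂ) (f m') * χ (∑ i, ξ i * (m - m') i) := by
          rw [h1, ← AddChar.map_add_eq_mul, h2]
  calc ∑ ξ : Fin d → F, Ft χ f ξ * (starRingEnd ℂ) (Ft χ f ξ)
      = ∑ ξ : Fin d → F, ∑ m : Fin d → F, ∑ m' : Fin d → F,
          f m * (starRingEnd ℂ) (f m') * χ (∑ i, ξ i * (m - m') i) :=
        Finset.sum_congr rfl fun ξ _ => key ξ
    _ = ∑ m : Fin d → F, ∑ m' : Fin d → F,
          f m * (starRingEnd ℂ) (f m') * ∑ ξ : Fin d → F, χ (∑ i, ξ i * (m - m') i) := by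
        rw [Finset.sum_comm]
        refine Finset.sum_congr rfl fun m _ => ?_
        rw [Finset.sum_comm]
        exact Finset.sum_congr rfl fun m' _ => (Finset.mul_sum _ _ _).symm
    _ = ∑ m : Fin d → F, ∑ m' : Fin d → F,
          f m * (starRingEnd ℂ) (f m')
            * (if m - m' = 0 then (Fintype.card F : ℂ) ^ d else 0) := by
        refine Finset.sum_congr rfl fun m _ => Finset.sum_congr rfl fun m' _ => ?_
        rw [sum_char_dot χ hχ (m - m')]
    _ = (Fintype.card F : ℂ) ^ d * ∑ m : Fin d → F, f m * (starRingEnd ℂ) (f m) := by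
        rw [Finset.mul_sum]
        refine Finset.sum_congr rfl fun m _ => ?_
        have : ∀ m' : Fin d → F,
            f m * (starRingEnd ℂ) (f m')
              * (if m - m' = 0 then (Fintype.card F : ℂ) ^ d else 0)
            = if m' = m then f m * (starRingEnd ℂ) (f m') * (Fintype.card F : ℂ) ^ d
              else 0 := by
          intro m'
          by_cases h : m' = m
          · simp [h]
          · have : m - m' ≠ 0 := fun hc => h (by
              have := sub_eq_zero.mp hc; exact this.symm)
            simp [this, h]
        rw [Finset.sum_congr rfl fun m' _ => this m']
        rw [Finset.sum_ite_eq' univ m]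
        simp [mul_comm]

lemma Ft_conv (χ : AddChar F ℂ) (g h : (Fin d → F) → ℂ) (ξ : Fin d → F) :
    Ft χ (fun m => ∑ n : Fin d → F, g (m - n) * h n) ξ = Ft χ g ξ * Ft χ h ξ := by
  unfold Ft
  calc ∑ m : Fin d → F, (∑ n : Fin d → F, g (m - n) * h n) * χ (∑ i, m i * ξ i)
      = ∑ m : Fin d → F, ∑ n : Fin d → F, g (m - n) * h n * χ (∑ i, m i * ξ i) :=
        Finset.sum_congr rfl fun m _ => Finset.sum_mul _ _ _
    _ = ∑ n : Fin d → F, ∑ m : Fin d → F, g (m - n) * h n * χ (∑ i, m i * ξ i) :=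
        Finset.sum_comm
    _ = ∑ n : Fin d → F, ∑ u : Fin d → F,
          g u * h n * (χ (∑ i, u i * ξ i) * χ (∑ i, n i * ξ i)) := by
        refine Finset.sum_congr rfl fun n _ => ?_
        refine Fintype.sum_equiv (Equiv.subRight n) _ _ fun m => ?_
        have h2 : (∑ i, (m - n) i * ξ i) + (∑ i, n i * ξ i) = ∑ i, m i * ξ i := by
          rw [← Finset.sum_add_distrib]
          exact Finset.sum_congr rfl fun i _ => by
            simp [Pi.sub_apply, sub_mul]
        simp only [Equiv.subRight_apply]
        rw [← AddChar.map_add_eq_mul, h2]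
    _ = (∑ u : Fin d → F, g u * χ (∑ i, u i * ξ i))
          * ∑ n : Fin d → F, h n * χ (∑ i, n i * ξ i) := by
        rw [Finset.sum_mul_sum, Finset.sum_comm]
        exact Finset.sum_congr rfl fun n _ => Finset.sum_congr rfl fun u _ => by ring


lemma count_univ {j : F} (ξ : Fin d → F) :
    (((univ : Finset (Fin d → F)).filter (fun x => ∏ i, x i = j)).filter
        (fun x => ∀ i ∈ (univ : Finset (Fin d)), x i + ξ i = 0)).card ≤ 1 := by
  refine Finset.card_le_one.mpr fun x hx y hy => funext fun i => ?_
  simp only [Finset.mem_filter, Finset.mem_univ, true_implies] at hx hy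
  have h1 := hx.2 i
  have h2 := hy.2 i
  have : x i = -ξ i := by linear_combination h1
  have h2' : y i = -ξ i := by linear_combination h2
  rw [this, h2']

lemma count_bound {j : F} (hj : j ≠ 0) (ξ : Fin d → F) (S : Finset (Fin d))
    (hS : S ≠ univ) :
    (((univ : Finset (Fin d → F)).filter (fun x => ∏ i, x i = j)).filter
        (fun x => ∀ i ∈ S, x i + ξ i = 0)).card
      ≤ Fintype.card F ^ (d - 1 - S.card) := by
  obtain ⟨i₀, hi₀⟩ : ∃ i₀, i₀ ∉ S := by
    by_contra hc; push_neg at hc; exact hS (Finset.eq_univ_iff_forall.mpr hc)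
  set T : Finset (Fin d) := univ \ insert i₀ S with hT
  have hcard : ((univ : Finset ({i // i ∈ T} → F))).card = Fintype.card F ^ T.card := by
    rw [Finset.card_univ, Fintype.card_fun, Fintype.card_coe]
  have hTcard : T.card = d - 1 - S.card := by
    have h1 : T.card = Fintype.card (Fin d) - (insert i₀ S).card :=
      Finset.card_sdiff_of_subset (Finset.subset_univ _)
    have h2 : (insert i₀ S).card = S.card + 1 := Finset.card_insert_of_notMem hi₀
    have h3 : S.card + 1 ≤ d := by
      have := Finset.card_le_univ (insert i₀ S)
      simpa [h2, Finset.card_univ] using this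
    rw [h1, h2, Fintype.card_fin]
    omega
  rw [← hTcard, ← hcard]
  refine Finset.card_le_card_of_injOn (fun x => fun i : {i // i ∈ T} => x i)
    (fun x _ => Finset.mem_univ _) ?_
  intro x hx y hy hxy
  simp only [Finset.coe_filter, Set.mem_setOf_eq, Finset.mem_filter, Finset.mem_univ,
    true_and] at hx hy
  have hxne : ∀ i, x i ≠ 0 := by
    intro i hzero
    exact hj (hx.1 ▸ (Finset.prod_eq_zero (Finset.mem_univ i) hzero).symm ▸
      (Finset.prod_eq_zero (Finset.mem_univ i) hzero))
  have heq : ∀ i, i ≠ i₀ → x i = y i := by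
    intro i hi
    by_cases hiS : i ∈ S
    · have := hx.2 i hiS; have h2 := hy.2 i hiS
      have e1 : x i = -ξ i := by linear_combination this
      have e2 : y i = -ξ i := by linear_combination h2
      rw [e1, e2]
    · have hiT : i ∈ T := by
        simp only [hT, Finset.mem_sdiff, Finset.mem_univ, Finset.mem_insert, true_and]
        tauto
      exact congrFun hxy ⟨i, hiT⟩
  funext i
  by_cases hi : i = i₀
  · subst hi
    have hpx : x i * ∏ k ∈ univ.erase i, x k = j := by
      rw [Finset.mul_prod_erase univ x (Finset.mem_univ i)]; exact hx.1
    have hpy : y i * ∏ k ∈ univ.erase i, y k = j := by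
      rw [Finset.mul_prod_erase univ y (Finset.mem_univ i)]; exact hy.1
    have hprodeq : ∏ k ∈ univ.erase i, x k = ∏ k ∈ univ.erase i, y k :=
      Finset.prod_congr rfl fun k hk => heq k (Finset.ne_of_mem_erase hk)
    have hne : ∏ k ∈ univ.erase i, x k ≠ 0 :=
      Finset.prod_ne_zero_iff.mpr fun k _ => hxne k
    rw [hprodeq] at hpx
    exact mul_right_cancel₀ (hprodeq ▸ hne) (hpx.trans hpy.symm)
  · exact heq i hi


lemma sum_char_mul_ne_zero (χ : AddChar F ℂ) (hχ : χ ≠ 1) (c : F) :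
    ∑ a ∈ univ.filter (fun a : F => a ≠ 0), χ (a * c)
      = (if c = 0 then (Fintype.card F : ℂ) else 0) - 1 := by
  have hsplit : ∑ a : F, χ (a * c)
      = χ (0 * c) + ∑ a ∈ univ.erase 0, χ (a * c) :=
    (Finset.add_sum_erase univ (fun a => χ (a * c)) (Finset.mem_univ 0)).symm
  have hfe : univ.filter (fun a : F => a ≠ 0) = univ.erase 0 := by
    ext a; simp [Finset.mem_erase]
  rw [sum_char_mul χ hχ c] at hsplit
  rw [hfe]
  have hz : χ (0 * c) = 1 := by rw [zero_mul, AddChar.map_zero_eq_one]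
  rw [hz] at hsplit
  rw [hsplit]
  ring

lemma Ft_indicator_eq {j : F} (χ : AddChar F ℂ) (ξ : Fin d → F) :
    Ft χ (Set.indicator {v : Fin d → F | ∀ i, v i ≠ 0}
        (fun v => (((Fintype.card F : ℂ) - 1) ^ (d - 1))⁻¹ *
          ∑ x ∈ univ.filter (fun x : Fin d → F => ∏ i, x i = j), χ (∑ i, v i * x i))) ξ
      = (((Fintype.card F : ℂ) - 1) ^ (d - 1))⁻¹ *
          ∑ x ∈ univ.filter (fun x : Fin d → F => ∏ i, x i = j),
            ∏ i, ∑ a ∈ univ.filter (fun a : F => a ≠ 0), χ (a * (x i + ξ i)) := by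
  classical
  set c0 : ℂ := (((Fintype.card F : ℂ) - 1) ^ (d - 1))⁻¹ with hc0
  set Hj := (univ : Finset (Fin d → F)).filter (fun x => ∏ i, x i = j) with hHj
  set N0 := (univ : Finset (Fin d → F)).filter (fun n => ∀ i, n i ≠ 0) with hN0
  have step1 : Ft χ (Set.indicator {v : Fin d → F | ∀ i, v i ≠ 0}
        (fun v => c0 * ∑ x ∈ Hj, χ (∑ i, v i * x i))) ξ
      = ∑ n ∈ N0, (c0 * ∑ x ∈ Hj, χ (∑ i, n i * x i)) * χ (∑ i, n i * ξ i) := by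
    unfold Ft
    rw [hN0, Finset.sum_filter]
    refine Finset.sum_congr rfl fun n _ => ?_
    by_cases h : ∀ i, n i ≠ 0
    · rw [if_pos h, Set.indicator_of_mem (by exact h)]
    · rw [if_neg h, Set.indicator_of_notMem (by exact h), zero_mul]
  rw [step1]
  have step2 : ∀ n ∈ N0, (c0 * ∑ x ∈ Hj, χ (∑ i, n i * x i)) * χ (∑ i, n i * ξ i)
      = c0 * ∑ x ∈ Hj, χ (∑ i, n i * (x i + ξ i)) := by
    intro n _
    rw [mul_assoc, Finset.sum_mul]
    congr 1
    refine Finset.sum_congr rfl fun x _ => ?_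
    rw [← AddChar.map_add_eq_mul, ← Finset.sum_add_distrib]
    congr 1
    exact Finset.sum_congr rfl fun i _ => (mul_add _ _ _).symm
  rw [Finset.sum_congr rfl step2, ← Finset.mul_sum]
  congr 1
  rw [Finset.sum_comm]
  refine Finset.sum_congr rfl fun x _ => ?_
  have hN0pi : N0 = Fintype.piFinset (fun _ : Fin d => univ.filter (fun a : F => a ≠ 0)) := by
    ext n
    simp [hN0, Fintype.mem_piFinset]
  rw [hN0pi]
  rw [← Finset.sum_prod_piFinset (univ.filter (fun a : F => a ≠ 0))
    (fun i a => χ (a * (x i + ξ i)))]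
  refine Finset.sum_congr rfl fun n _ => ?_
  rw [map_sum_eq_prod χ univ (fun i => n i * (x i + ξ i))]


lemma counting (hq : 3 ≤ Fintype.card F) (hd : 1 ≤ d) {j : F} (hj : j ≠ 0)
    (ξ : Fin d → F) :
    ∑ x ∈ (univ : Finset (Fin d → F)).filter (fun x => ∏ i, x i = j),
        ∏ i, (if x i + ξ i = 0 then (Fintype.card F : ℝ) - 1 else 1)
      ≤ ((Fintype.card F : ℝ) - 2) ^ d
          + 2 ^ d * (Fintype.card F : ℝ) ^ (d - 1) := by
  classical
  set q := Fintype.card F with hqdef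
  set Hj := (univ : Finset (Fin d → F)).filter (fun x => ∏ i, x i = j) with hHj
  have hq3 : (3 : ℝ) ≤ (q : ℝ) := by exact_mod_cast hq
  have hprod : ∀ x : Fin d → F,
      (∏ i, (if x i + ξ i = 0 then (q : ℝ) - 1 else 1))
      = ∑ t ∈ (univ : Finset (Fin d)).powerset,
          (if (∀ i ∈ t, x i + ξ i = 0) then ((q : ℝ) - 2) ^ t.card else 0) := by
    intro x
    have h1 : (∏ i, (if x i + ξ i = 0 then (q : ℝ) - 1 else 1))
        = ∏ i, ((if x i + ξ i = 0 then (q : ℝ) - 2 else 0) + 1) := by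
      refine Finset.prod_congr rfl fun i _ => ?_
      split_ifs <;> ring
    rw [h1, Finset.prod_add]
    refine Finset.sum_congr rfl fun t _ => ?_
    rw [Finset.prod_const_one, mul_one]
    by_cases h : ∀ i ∈ t, x i + ξ i = 0
    · rw [if_pos h]
      calc ∏ i ∈ t, (if x i + ξ i = 0 then (q : ℝ) - 2 else 0)
          = ∏ _i ∈ t, ((q : ℝ) - 2) :=
            Finset.prod_congr rfl fun i hi => by rw [if_pos (h i hi)]
        _ = ((q : ℝ) - 2) ^ t.card := Finset.prod_const _
    · rw [if_neg h]
      push_neg at h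
      obtain ⟨i, hit, hi⟩ := h
      exact Finset.prod_eq_zero hit (by rw [if_neg hi])
  calc ∑ x ∈ Hj, ∏ i, (if x i + ξ i = 0 then (q : ℝ) - 1 else 1)
      = ∑ t ∈ (univ : Finset (Fin d)).powerset, ∑ x ∈ Hj,
          (if (∀ i ∈ t, x i + ξ i = 0) then ((q : ℝ) - 2) ^ t.card else 0) := by
        rw [Finset.sum_congr rfl fun x _ => hprod x, Finset.sum_comm]
    _ = ∑ t ∈ (univ : Finset (Fin d)).powerset,
          ((Hj.filter (fun x => ∀ i ∈ t, x i + ξ i = 0)).card : ℝ)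
            * ((q : ℝ) - 2) ^ t.card := by
        refine Finset.sum_congr rfl fun t _ => ?_
        rw [← Finset.sum_filter, Finset.sum_const, nsmul_eq_mul]
    _ ≤ ((q : ℝ) - 2) ^ d + 2 ^ d * (q : ℝ) ^ (d - 1) := by
        have hbound : ∀ t ∈ (univ : Finset (Fin d)).powerset,
            ((Hj.filter (fun x => ∀ i ∈ t, x i + ξ i = 0)).card : ℝ)
              * ((q : ℝ) - 2) ^ t.card
            ≤ if t = univ then ((q : ℝ) - 2) ^ d else (q : ℝ) ^ (d - 1) := by
          intro t _
          by_cases ht : t = univ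
          · subst ht
            rw [if_pos rfl]
            have h1 := count_univ (j := j) ξ
            have h2 : ((Hj.filter (fun x => ∀ i ∈ univ, x i + ξ i = 0)).card : ℝ) ≤ 1 := by
              exact_mod_cast h1
            have h3 : (univ : Finset (Fin d)).card = d := by
              rw [Finset.card_univ, Fintype.card_fin]
            rw [h3]
            have h4 : (0:ℝ) ≤ ((q : ℝ) - 2) ^ d :=
              pow_nonneg (by linarith) d
            nlinarith [h4, h2]
          · rw [if_neg ht]
            have h1 := count_bound hj ξ t ht
            have h2 : ((Hj.filter (fun x => ∀ i ∈ t, x i + ξ i = 0)).card : ℝ)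
                ≤ (q : ℝ) ^ (d - 1 - t.card) := by exact_mod_cast h1
            have h3 : ((q : ℝ) - 2) ^ t.card ≤ (q : ℝ) ^ t.card :=
              pow_le_pow_left₀ (by linarith) (by linarith) _
            have h5 : (q : ℝ) ^ (d - 1 - t.card) * (q : ℝ) ^ t.card
                = (q : ℝ) ^ (d - 1) := by
              have hlt : t.card < d := by
                have hsub : t ⊂ univ := Finset.ssubset_univ_iff.mpr ht
                have := Finset.card_lt_card hsub
                simpa [Finset.card_univ, Fintype.card_fin] using this
              have hexp : d - 1 - t.card + t.card = d - 1 :=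
                Nat.sub_add_cancel (Nat.le_pred_of_lt hlt)
              rw [← pow_add, hexp]
            calc ((Hj.filter (fun x => ∀ i ∈ t, x i + ξ i = 0)).card : ℝ)
                  * ((q : ℝ) - 2) ^ t.card
                ≤ (q : ℝ) ^ (d - 1 - t.card) * (q : ℝ) ^ t.card := by
                  apply mul_le_mul h2 h3 (pow_nonneg (by linarith) _)
                    (pow_nonneg (by linarith) _)
              _ = (q : ℝ) ^ (d - 1) := h5
        calc ∑ t ∈ (univ : Finset (Fin d)).powerset,
              ((Hj.filter (fun x => ∀ i ∈ t, x i + ξ i = 0)).card : ℝ)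
                * ((q : ℝ) - 2) ^ t.card
            ≤ ∑ t ∈ (univ : Finset (Fin d)).powerset,
                (if t = univ then ((q : ℝ) - 2) ^ d else (q : ℝ) ^ (d - 1)) :=
              Finset.sum_le_sum hbound
          _ ≤ ((q : ℝ) - 2) ^ d + 2 ^ d * (q : ℝ) ^ (d - 1) := by
              rw [← Finset.add_sum_erase _ _
                (Finset.mem_powerset.mpr (Finset.Subset.refl univ))]
              rw [if_pos rfl]
              have hcard : (((univ : Finset (Fin d)).powerset.erase univ).card : ℝ)
                  ≤ 2 ^ d := by
                have h1 : ((univ : Finset (Fin d)).powerset.erase univ).card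
                    ≤ (univ : Finset (Fin d)).powerset.card :=
                  Finset.card_le_card (Finset.erase_subset _ _)
                have h2 : (univ : Finset (Fin d)).powerset.card = 2 ^ d := by
                  rw [Finset.card_powerset, Finset.card_univ, Fintype.card_fin]
                have : ((univ : Finset (Fin d)).powerset.erase univ).card ≤ 2 ^ d :=
                  h2 ▸ h1
                exact_mod_cast this
              have hsum : ∑ t ∈ (univ : Finset (Fin d)).powerset.erase univ,
                  (if t = univ then ((q : ℝ) - 2) ^ d else (q : ℝ) ^ (d - 1))
                  ≤ 2 ^ d * (q : ℝ) ^ (d - 1) := by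
                have : ∀ t ∈ (univ : Finset (Fin d)).powerset.erase univ,
                    (if t = univ then ((q : ℝ) - 2) ^ d else (q : ℝ) ^ (d - 1))
                    ≤ (q : ℝ) ^ (d - 1) := by
                  intro t ht
                  rw [if_neg (Finset.ne_of_mem_erase ht)]
                calc ∑ t ∈ (univ : Finset (Fin d)).powerset.erase univ,
                      (if t = univ then ((q : ℝ) - 2) ^ d else (q : ℝ) ^ (d - 1))
                    ≤ ∑ _t ∈ (univ : Finset (Fin d)).powerset.erase univ,
                        (q : ℝ) ^ (d - 1) := Finset.sum_le_sum this
                  _ = (((univ : Finset (Fin d)).powerset.erase univ).card : ℝ)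
                        * (q : ℝ) ^ (d - 1) := by
                      rw [Finset.sum_const, nsmul_eq_mul]
                  _ ≤ 2 ^ d * (q : ℝ) ^ (d - 1) := by
                      apply mul_le_mul_of_nonneg_right hcard
                        (pow_nonneg (by linarith) _)
              linarith


lemma Ft_indicator_bound (hq : 3 ≤ Fintype.card F) (hd : 1 ≤ d) {j : F} (hj : j ≠ 0)
    (χ : AddChar F ℂ) (hχ : χ ≠ 1) (ξ : Fin d → F) :
    ‖Ft χ (Set.indicator {v : Fin d → F | ∀ i, v i ≠ 0}
        (fun v => (((Fintype.card F : ℂ) - 1) ^ (d - 1))⁻¹ *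
          ∑ x ∈ univ.filter (fun x : Fin d → F => ∏ i, x i = j), χ (∑ i, v i * x i))) ξ‖
      ≤ (1 + 4 ^ d) * (Fintype.card F : ℝ) := by
  classical
  rw [Ft_indicator_eq]
  set q := Fintype.card F with hqdef
  have hq3 : (3 : ℝ) ≤ (q : ℝ) := by exact_mod_cast hq
  have hpos : (0 : ℝ) < ((q : ℝ) - 1) ^ (d - 1) := pow_pos (by linarith) _
  -- norm of the constant
  have habs_c0 : ‖(((q : ℂ) - 1) ^ (d - 1))⁻¹‖
      = (((q : ℝ) - 1) ^ (d - 1))⁻¹ := by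
    rw [norm_inv, norm_pow]
    congr 2
    have : ((q : ℂ) - 1) = (((q : ℝ) - 1 : ℝ) : ℂ) := by push_cast; ring
    rw [this, Complex.norm_real, Real.norm_eq_abs, _root_.abs_of_nonneg (by linarith)]
  -- bound on each factor
  have hfactor : ∀ c : F, ‖∑ a ∈ univ.filter (fun a : F => a ≠ 0), χ (a * c)‖
      ≤ if c = 0 then (q : ℝ) - 1 else 1 := by
    intro c
    rw [sum_char_mul_ne_zero χ hχ c]
    by_cases h : c = 0
    · rw [if_pos h, if_pos h]
      have : ((q : ℂ) - 1) = (((q : ℝ) - 1 : ℝ) : ℂ) := by push_cast; ring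
      rw [this, Complex.norm_real, Real.norm_eq_abs, _root_.abs_of_nonneg (by linarith)]
    · rw [if_neg h, if_neg h]
      simp
  have hsum_bound : ‖∑ x ∈ univ.filter (fun x : Fin d → F => ∏ i, x i = j),
        ∏ i, ∑ a ∈ univ.filter (fun a : F => a ≠ 0), χ (a * (x i + ξ i))‖
      ≤ ((q : ℝ) - 2) ^ d + 2 ^ d * (q : ℝ) ^ (d - 1) := by
    calc ‖∑ x ∈ univ.filter (fun x : Fin d → F => ∏ i, x i = j),
          ∏ i, ∑ a ∈ univ.filter (fun a : F => a ≠ 0), χ (a * (x i + ξ i))‖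
        ≤ ∑ x ∈ univ.filter (fun x : Fin d → F => ∏ i, x i = j),
            ‖∏ i, ∑ a ∈ univ.filter (fun a : F => a ≠ 0), χ (a * (x i + ξ i))‖ :=
          norm_sum_le _ _
      _ ≤ ∑ x ∈ univ.filter (fun x : Fin d → F => ∏ i, x i = j),
            ∏ i, (if x i + ξ i = 0 then (q : ℝ) - 1 else 1) := by
          refine Finset.sum_le_sum fun x _ => ?_
          rw [norm_prod]
          refine Finset.prod_le_prod (fun i _ => norm_nonneg _)
            (fun i _ => hfactor (x i + ξ i))
      _ ≤ ((q : ℝ) - 2) ^ d + 2 ^ d * (q : ℝ) ^ (d - 1) := counting hq hd hj ξ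
  rw [norm_mul, habs_c0]
  have hfinal : (((q : ℝ) - 1) ^ (d - 1))⁻¹
        * (((q : ℝ) - 2) ^ d + 2 ^ d * (q : ℝ) ^ (d - 1))
      ≤ (1 + 4 ^ d) * (q : ℝ) := by
    have hX : ((q:ℝ)-2)^d + 2^d*(q:ℝ)^(d-1) ≤ ((q:ℝ)-1)^(d-1) * ((1+4^d)*(q:ℝ)) := by
      have e1 : ((q:ℝ)-2)^d = ((q:ℝ)-2)^(d-1) * ((q:ℝ)-2) := by
        conv_lhs => rw [show d = (d-1)+1 by omega]
        rw [pow_succ]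
      have e2 : ((q:ℝ)-2)^(d-1) ≤ ((q:ℝ)-1)^(d-1) :=
        pow_le_pow_left₀ (by linarith) (by linarith) _
      have e3 : (q:ℝ)^(d-1) ≤ 2^(d-1) * ((q:ℝ)-1)^(d-1) := by
        have h23 : (q:ℝ) ≤ 2*((q:ℝ)-1) := by linarith
        calc (q:ℝ)^(d-1) ≤ (2*((q:ℝ)-1))^(d-1) := pow_le_pow_left₀ (by linarith) h23 _
          _ = 2^(d-1) * ((q:ℝ)-1)^(d-1) := mul_pow _ _ _
      have e4 : (2:ℝ)^d * 2^(d-1) ≤ 4^d := by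
        have h1 : (2:ℝ)^(d-1) ≤ 2^d := pow_le_pow_right₀ (by norm_num) (Nat.sub_le d 1)
        have h2 : (4:ℝ)^d = 2^d * 2^d := by rw [← mul_pow]; norm_num
        nlinarith [pow_pos (show (0:ℝ) < 2 by norm_num) d]
      have hp1 : (0:ℝ) ≤ ((q:ℝ)-1)^(d-1) := le_of_lt hpos
      have t1 : ((q:ℝ)-2)^d ≤ ((q:ℝ)-1)^(d-1) * (q:ℝ) := by
        rw [e1]
        have := mul_le_mul e2 (show (q:ℝ)-2 ≤ (q:ℝ) by linarith) (by linarith) hp1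
        linarith
      have t2 : (2:ℝ)^d * (q:ℝ)^(d-1) ≤ ((q:ℝ)-1)^(d-1) * (4^d * (q:ℝ)) := by
        have t3 : (0:ℝ) ≤ ((q:ℝ)-1)^(d-1) * 4^d * ((q:ℝ)-1) :=
          mul_nonneg (mul_nonneg hp1 (by positivity)) (by linarith)
        calc (2:ℝ)^d * (q:ℝ)^(d-1) ≤ 2^d * (2^(d-1) * ((q:ℝ)-1)^(d-1)) :=
              mul_le_mul_of_nonneg_left e3 (by positivity)
          _ = (2^d * 2^(d-1)) * ((q:ℝ)-1)^(d-1) := by ring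
          _ ≤ 4^d * ((q:ℝ)-1)^(d-1) := mul_le_mul_of_nonneg_right e4 hp1
          _ ≤ ((q:ℝ)-1)^(d-1) * (4^d * (q:ℝ)) := by nlinarith [t3]
      calc ((q:ℝ)-2)^d + 2^d*(q:ℝ)^(d-1)
          ≤ ((q:ℝ)-1)^(d-1)*(q:ℝ) + ((q:ℝ)-1)^(d-1)*(4^d*(q:ℝ)) := add_le_add t1 t2
        _ = ((q:ℝ)-1)^(d-1) * ((1+4^d)*(q:ℝ)) := by ring
    calc (((q:ℝ)-1)^(d-1))⁻¹ * (((q:ℝ)-2)^d + 2^d*(q:ℝ)^(d-1))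
        ≤ (((q:ℝ)-1)^(d-1))⁻¹ * (((q:ℝ)-1)^(d-1) * ((1+4^d)*(q:ℝ))) :=
          mul_le_mul_of_nonneg_left hX (by positivity)
      _ = (1+4^d)*(q:ℝ) := by field_simp
  calc (((q : ℝ) - 1) ^ (d - 1))⁻¹
        * ‖∑ x ∈ univ.filter (fun x : Fin d → F => ∏ i, x i = j),
            ∏ i, ∑ a ∈ univ.filter (fun a : F => a ≠ 0), χ (a * (x i + ξ i))‖
      ≤ (((q : ℝ) - 1) ^ (d - 1))⁻¹
          * (((q : ℝ) - 2) ^ d + 2 ^ d * (q : ℝ) ^ (d - 1)) :=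
        mul_le_mul_of_nonneg_left hsum_bound (by positivity)
    _ ≤ (1 + 4 ^ d) * (q : ℝ) := hfinal


lemma plancherel_real (χ : AddChar F ℂ) (hχ : χ ≠ 1) (f : (Fin d → F) → ℂ) :
    ∑ ξ : Fin d → F, ‖Ft χ f ξ‖ ^ 2
      = (Fintype.card F : ℝ) ^ d * ∑ m : Fin d → F, ‖f m‖ ^ 2 := by
  have hcast : ∀ (z : ℂ), ((‖z‖ : ℂ)) ^ 2 = z * (starRingEnd ℂ) z := by
    intro z
    rw [← Complex.ofReal_pow, Complex.sq_norm]
    exact (Complex.mul_conj z).symm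
  apply Complex.ofReal_injective
  push_cast
  rw [Finset.sum_congr rfl fun ξ _ => hcast (Ft χ f ξ),
      Finset.sum_congr rfl fun m _ => hcast (f m)]
  exact plancherel χ hχ f

end ConvN0Aux

open ConvN0Aux Finset in
/-- `‖g ∗ ((dσ_j)^∨ 1_{N_0})‖_{ℓ²} ≤ C q ‖g‖_{ℓ²}` with `C` depending only
on `d`. -/
theorem conv_N0_l2_bound (d : ℕ) (hd : 1 ≤ d) :
    ∃ C : ℝ, 0 < C ∧
      ∀ (F : Type) [Field F] [Fintype F] [DecidableEq F],
        Odd (Fintype.card F) →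
        ∀ (χ : AddChar F ℂ), χ ≠ 1 →
        ∀ j : F, j ≠ 0 →
        ∀ g : (Fin d → F) → ℂ,
          Real.sqrt (∑ m : Fin d → F,
              ‖∑ n : Fin d → F, g (m - n) *
                (Set.indicator {v : Fin d → F | ∀ i, v i ≠ 0}
                  (fun v => (((Fintype.card F : ℂ) - 1) ^ (d - 1))⁻¹ *
                    ∑ x ∈ Finset.univ.filter (fun x : Fin d → F => ∏ i, x i = j),
                      χ (∑ i, v i * x i)) n)‖ ^ 2)
            ≤ C * Fintype.card F *
                Real.sqrt (∑ n : Fin d → F, ‖g n‖ ^ 2) := by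
  refine ⟨1 + 4 ^ d, by positivity, ?_⟩
  intro F _ _ _ hodd χ hχ j hj g
  classical
  have hq : 3 ≤ Fintype.card F := by
    have h2 : 2 ≤ Fintype.card F := Fintype.one_lt_card
    rcases hodd with ⟨k, hk⟩
    omega
  set q : ℕ := Fintype.card F with hqdef
  set h : (Fin d → F) → ℂ := Set.indicator {v : Fin d → F | ∀ i, v i ≠ 0}
      (fun v => (((q : ℂ) - 1) ^ (d - 1))⁻¹ *
        ∑ x ∈ Finset.univ.filter (fun x : Fin d → F => ∏ i, x i = j),
          χ (∑ i, v i * x i)) with hh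
  set conv : (Fin d → F) → ℂ := fun m => ∑ n : Fin d → F, g (m - n) * h n with hconv
  have main : ∑ m : Fin d → F, ‖conv m‖ ^ 2
      ≤ ((1 + 4 ^ d) * (q : ℝ)) ^ 2 * ∑ n : Fin d → F, ‖g n‖ ^ 2 := by
    have hp1 := plancherel_real χ hχ conv
    have hp2 := plancherel_real χ hχ g
    have hqd : (0 : ℝ) < (q : ℝ) ^ d := by positivity
    have hFt : ∀ ξ : Fin d → F, ‖Ft χ conv ξ‖ ^ 2
        ≤ ((1 + 4 ^ d) * (q : ℝ)) ^ 2 * ‖Ft χ g ξ‖ ^ 2 := by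
      intro ξ
      have he : Ft χ conv ξ = Ft χ g ξ * Ft χ h ξ := by
        rw [hconv]; exact Ft_conv χ g h ξ
      rw [he, norm_mul]
      have hb : ‖Ft χ h ξ‖ ≤ (1 + 4 ^ d) * (q : ℝ) := by
        rw [hh]
        exact Ft_indicator_bound hq hd hj χ hχ ξ
      have hb2 : ‖Ft χ h ξ‖ ^ 2 ≤ ((1 + 4 ^ d) * (q : ℝ)) ^ 2 :=
        pow_le_pow_left₀ (norm_nonneg _) hb 2
      calc (‖Ft χ g ξ‖ * ‖Ft χ h ξ‖) ^ 2
          = ‖Ft χ g ξ‖ ^ 2 * ‖Ft χ h ξ‖ ^ 2 := by ring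
        _ ≤ ‖Ft χ g ξ‖ ^ 2 * ((1 + 4 ^ d) * (q : ℝ)) ^ 2 :=
            mul_le_mul_of_nonneg_left hb2 (by positivity)
        _ = ((1 + 4 ^ d) * (q : ℝ)) ^ 2 * ‖Ft χ g ξ‖ ^ 2 := by ring
    have hsum : ∑ ξ : Fin d → F, ‖Ft χ conv ξ‖ ^ 2
        ≤ ((1 + 4 ^ d) * (q : ℝ)) ^ 2 * ∑ ξ : Fin d → F, ‖Ft χ g ξ‖ ^ 2 := by
      rw [Finset.mul_sum]
      exact Finset.sum_le_sum fun ξ _ => hFt ξ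
    rw [hp1, hp2] at hsum
    have hre : ((1 + 4 ^ d) * (q : ℝ)) ^ 2 * ((q : ℝ) ^ d * ∑ m : Fin d → F, ‖g m‖ ^ 2)
        = (q : ℝ) ^ d * (((1 + 4 ^ d) * (q : ℝ)) ^ 2 * ∑ m : Fin d → F, ‖g m‖ ^ 2) := by
      ring
    rw [hre] at hsum
    exact le_of_mul_le_mul_left hsum hqd
  have hC : (0 : ℝ) ≤ (1 + 4 ^ d) * (q : ℝ) := by positivity
  calc Real.sqrt (∑ m : Fin d → F, ‖conv m‖ ^ 2)
      ≤ Real.sqrt (((1 + 4 ^ d) * (q : ℝ)) ^ 2 * ∑ n : Fin d → F, ‖g n‖ ^ 2) :=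
        Real.sqrt_le_sqrt main
    _ = (1 + 4 ^ d) * (q : ℝ) * Real.sqrt (∑ n : Fin d → F, ‖g n‖ ^ 2) := by
        rw [Real.sqrt_mul (sq_nonneg _), Real.sqrt_sq hC]
    _ = (1 + 4 ^ d) * (q : ℝ) * Real.sqrt (∑ n : Fin d → F, ‖g n‖ ^ 2) := rfl
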